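/- On O₂ = {(x,v,a) : v ≠ 0} with the presymplectic form ω = v⁻³ dv ∧ da, the vector fields Y₁ = 2v ∂/∂a, Y₂ = v ∂/∂v + 2a ∂/∂a, Y₃ = v ∂/∂x + a ∂/∂v + ((3/2)a²/v − 2c₀v³) ∂/∂a satisfy ι_{Y₁}ω = d(2/v), ι_{Y₂}ω = d(a/v²), ι_{Y₃}ω = d(a²/(2v³) + 2c₀v). -/

import Mathlib

/-- on `O₂ = {(x,v,a) : v ≠ 0}` with `ω = v⁻³ dv ∧ da`
(so `ω p u w = (u_v w_a − u_a w_v)/v³`), the vector fields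
`Y₁ = 2v ∂ₐ`, `Y₂ = v ∂ᵥ + 2a ∂ₐ`, `Y₃ = v ∂ₓ + a ∂ᵥ + ((3/2)a²/v − 2c₀v³) ∂ₐ`
satisfy `ι_{Y₁}ω = d(2/v)`, `ι_{Y₂}ω = d(a/v²)`, `ι_{Y₃}ω = d(a²/(2v³) + 2c₀v)`. -/
theorem kummerSchwarz_hamiltonian_vector_fields (c₀ : ℝ)
    (ω : ℝ × ℝ × ℝ → (ℝ × ℝ × ℝ) → (ℝ × ℝ × ℝ) → ℝ)
    (hω : ∀ p u w, ω p u w = (u.2.1 * w.2.2 - u.2.2 * w.2.1) / p.2.1 ^ 3)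
    (Y₁ Y₂ Y₃ : ℝ × ℝ × ℝ → ℝ × ℝ × ℝ)
    (hY₁ : ∀ p, Y₁ p = (0, 0, 2 * p.2.1))
    (hY₂ : ∀ p, Y₂ p = (0, p.2.1, 2 * p.2.2))
    (hY₃ : ∀ p, Y₃ p = (p.2.1, p.2.2, (3/2) * p.2.2 ^ 2 / p.2.1 - 2 * c₀ * p.2.1 ^ 3)) :
    ∀ p : ℝ × ℝ × ℝ, p.2.1 ≠ 0 → ∀ u : ℝ × ℝ × ℝ,
      ω p (Y₁ p) u = fderiv ℝ (fun q : ℝ × ℝ × ℝ => 2 / q.2.1) p u ∧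
      ω p (Y₂ p) u = fderiv ℝ (fun q : ℝ × ℝ × ℝ => q.2.2 / q.2.1 ^ 2) p u ∧
      ω p (Y₃ p) u = fderiv ℝ
        (fun q : ℝ × ℝ × ℝ => q.2.2 ^ 2 / (2 * q.2.1 ^ 3) + 2 * c₀ * q.2.1) p u := by
  intro p hp u
  have hv : HasFDerivAt (fun q : ℝ × ℝ × ℝ => q.2.1)
      ((ContinuousLinearMap.fst ℝ ℝ ℝ).comp (ContinuousLinearMap.snd ℝ ℝ (ℝ × ℝ))) p :=
    (hasFDerivAt_snd).fst
  have ha : HasFDerivAt (fun q : ℝ × ℝ × ℝ => q.2.2)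
      ((ContinuousLinearMap.snd ℝ ℝ ℝ).comp (ContinuousLinearMap.snd ℝ ℝ (ℝ × ℝ))) p :=
    (hasFDerivAt_snd).snd
  have hinv : HasFDerivAt (fun q : ℝ × ℝ × ℝ => (q.2.1)⁻¹)
      ((((1 : ℝ →L[ℝ] ℝ).smulRight (-(p.2.1 ^ 2)⁻¹)).comp
        ((ContinuousLinearMap.fst ℝ ℝ ℝ).comp (ContinuousLinearMap.snd ℝ ℝ (ℝ × ℝ))))) p :=
    ((hasDerivAt_inv hp).hasFDerivAt).comp p hv
  have h1 : (fun q : ℝ × ℝ × ℝ => 2 / q.2.1) = (fun q : ℝ × ℝ × ℝ => 2 * (q.2.1)⁻¹) := by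
    funext q; rw [div_eq_mul_inv]
  have h2 : (fun q : ℝ × ℝ × ℝ => q.2.2 / q.2.1 ^ 2)
      = (fun q : ℝ × ℝ × ℝ => q.2.2 * (q.2.1)⁻¹ * (q.2.1)⁻¹) := by
    funext q; rw [div_eq_mul_inv]; ring
  have h3 : (fun q : ℝ × ℝ × ℝ => q.2.2 ^ 2 / (2 * q.2.1 ^ 3) + 2 * c₀ * q.2.1)
      = (fun q : ℝ × ℝ × ℝ =>
          (1/2) * (q.2.2 * q.2.2 * ((q.2.1)⁻¹ * (q.2.1)⁻¹ * (q.2.1)⁻¹)) + 2 * c₀ * q.2.1) := by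
    funext q
    rcases eq_or_ne q.2.1 0 with h | h
    · simp [h]
    · field_simp
  have d1 := (hinv.const_mul (2:ℝ)).fderiv
  have d2 : fderiv ℝ (fun q : ℝ × ℝ × ℝ => q.2.2 * (q.2.1)⁻¹ * (q.2.1)⁻¹) p = _ :=
    ((ha.mul hinv).mul hinv).fderiv
  have d3 : fderiv ℝ (fun q : ℝ × ℝ × ℝ =>
          (1/2) * (q.2.2 * q.2.2 * ((q.2.1)⁻¹ * (q.2.1)⁻¹ * (q.2.1)⁻¹)) + 2 * c₀ * q.2.1) p = _ :=
    ((((ha.mul ha).mul ((hinv.mul hinv).mul hinv)).const_mul ((1:ℝ)/2)).add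
      (hv.const_mul (2*c₀))).fderiv
  rw [h1, h2, h3, d1, d2, d3, hω, hω, hω, hY₁, hY₂, hY₃]
  refine ⟨?_, ?_, ?_⟩ <;>
  · simp only [ContinuousLinearMap.add_apply, ContinuousLinearMap.smul_apply,
      ContinuousLinearMap.coe_comp', Function.comp_apply, ContinuousLinearMap.smulRight_apply,
      ContinuousLinearMap.one_apply, ContinuousLinearMap.coe_fst', ContinuousLinearMap.coe_snd',
      smul_eq_mul, Pi.mul_apply]
    field_simp
    ring
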